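/- The symmetrization map Φ : 𝒫 → 𝒜 from the commutative polynomial algebra in x₁,…,xₙ into the free associative algebra on X₁,…,Xₙ, defined degreewise by x^(α) ↦ Sym(X^(α)), is a vector-space isomorphism of 𝒫 onto the subspace ℛ of regular polynomials of 𝒜. -/

import Mathlib

open scoped BigOperators

noncomputable section

/-- The word `X₁^{α₁} ⋯ Xₙ^{αₙ}` as a list of generator indices. -/
def word (n : ℕ) (α : Fin n → ℕ) : List (Fin n) :=
  (List.finRange n).flatMap fun i => List.replicate (α i) i

/-- The symmetrization `symz(X^(α)) = (1/m!) ∑_{σ ∈ Σₘ} X'_{σ(1)} ⋯ X'_{σ(m)}`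
of the monomial `X^(α)` in the free associative algebra. -/
def symz (K : Type) [Field K] (n : ℕ) (α : Fin n → ℕ) : FreeAlgebra K (Fin n) :=
  ((Nat.factorial (word n α).length : K))⁻¹ •
    ∑ σ : Equiv.Perm (Fin (word n α).length),
      (List.ofFn fun j => FreeAlgebra.ι K ((word n α).get (σ j))).prod

/-- Regular homogeneous polynomials of degree `m`: the span of `m`-th powers of
linear forms in the generators. -/
def RegHom (K : Type) [Field K] (n m : ℕ) : Submodule K (FreeAlgebra K (Fin n)) :=
  Submodule.span K {x | ∃ c : Fin n → K, x = (∑ i, c i • FreeAlgebra.ι K i) ^ m}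

/-- Regular polynomials: the span of all powers of linear forms in the generators. -/
def Reg (K : Type) [Field K] (n : ℕ) : Submodule K (FreeAlgebra K (Fin n)) :=
  Submodule.span K {x | ∃ (m : ℕ) (c : Fin n → K), x = (∑ i, c i • FreeAlgebra.ι K i) ^ m}

/-- The symmetrization map `Φ` from commutative polynomials to the free algebra,
sending `x^(α)` to `symz(X^(α))` and extended linearly. -/
def Phi (K : Type) [Field K] (n : ℕ) (p : MvPolynomial (Fin n) K) : FreeAlgebra K (Fin n) :=
  ∑ d ∈ p.support, p.coeff d • symz K n (fun i => d i)

variable (K : Type) [Field K] (n : ℕ)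


def T (m : ℕ) (v : Fin m → Fin n) : FreeAlgebra K (Fin n) :=
  ∑ σ : Equiv.Perm (Fin m), (List.ofFn fun j => FreeAlgebra.ι K (v (σ j))).prod

lemma T_comp {m : ℕ} (v : Fin m → Fin n) (e : Equiv.Perm (Fin m)) :
    T K n m (fun j => v (e j)) = T K n m v := by
  unfold T
  exact Fintype.sum_equiv (Equiv.mulLeft e)
    (fun σ => (List.ofFn fun j => FreeAlgebra.ι K (v (e (σ j)))).prod)
    (fun σ => (List.ofFn fun j => FreeAlgebra.ι K (v (σ j))).prod) (fun σ => rfl)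

lemma count_ofFn' {β : Type*} [DecidableEq β] : ∀ {m : ℕ} (v : Fin m → β) (b : β),
    (List.ofFn v).count b = (Finset.univ.filter fun j => v j = b).card := by
  intro m
  induction m with
  | zero => intro v b; simp
  | succ m ih =>
    intro v b
    simp only [List.ofFn_succ, List.count_cons, ih, Finset.card_filter, Fin.sum_univ_succ, beq_iff_eq]
    omega

lemma T_congr {m₁ m₂ : ℕ} (v₁ : Fin m₁ → Fin n) (v₂ : Fin m₂ → Fin n)
    (h : (List.ofFn v₁).Perm (List.ofFn v₂)) : T K n m₁ v₁ = T K n m₂ v₂ := by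
  have hm : m₁ = m₂ := by simpa using h.length_eq
  subst hm
  have hcard : ∀ i, Fintype.card {j // v₁ j = i} = Fintype.card {j // v₂ j = i} := by
    intro i
    have h1 := (List.perm_iff_count.mp h) i
    rw [count_ofFn', count_ofFn'] at h1
    simpa [Fintype.card_subtype] using h1
  have e : ∀ c, {a // v₁ a = c} ≃ {b // v₂ b = c} := fun c => Fintype.equivOfCardEq (hcard c)
  have he : ∀ a, v₂ (Equiv.ofFiberEquiv e a) = v₁ a := Equiv.ofFiberEquiv_map e
  rw [show v₁ = (fun a => v₂ (Equiv.ofFiberEquiv e a)) from funext fun a => (he a).symm]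
  exact T_comp K n v₂ (Equiv.ofFiberEquiv e)
lemma symz_eq (α : Fin n → ℕ) :
    symz K n α = (((word n α).length.factorial : K))⁻¹ • T K n (word n α).length (word n α).get :=
  rfl

lemma count_word (α : Fin n → ℕ) (i : Fin n) : (word n α).count i = α i := by
  unfold word
  rw [List.count_flatMap]
  have : ∀ i' : Fin n, (List.count i ∘ fun i'' => List.replicate (α i'') i'') i'
      = if i' = i then α i' else 0 := by
    intro i'
    simp [List.count_replicate]
  rw [List.map_congr_left (fun x _ => this x)]
  rw [← List.ofFn_eq_map, List.sum_ofFn]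
  simp

lemma word_perm_ofFn {m : ℕ} (v : Fin m → Fin n) :
    (word n fun i => (List.ofFn v).count i).Perm (List.ofFn v) := by
  rw [List.perm_iff_count]
  intro a
  rw [count_word]

/-- the abelianization map -/
def piA : FreeAlgebra K (Fin n) →ₐ[K] MvPolynomial (Fin n) K :=
  FreeAlgebra.lift K (fun i => (MvPolynomial.X i : MvPolynomial (Fin n) K))

lemma factorial_cast_ne [CharZero K] (m : ℕ) : ((m.factorial : K)) ≠ 0 := by
  exact_mod_cast m.factorial_ne_zero

lemma piA_T {m : ℕ} (v : Fin m → Fin n) :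
    piA K n (T K n m v) = (m.factorial : ℕ) • ∏ j, MvPolynomial.X (v j) := by
  unfold T piA
  rw [map_sum]
  have h1 : ∀ σ : Equiv.Perm (Fin m),
      (FreeAlgebra.lift K (fun i => (MvPolynomial.X i : MvPolynomial (Fin n) K)))
        ((List.ofFn fun j => FreeAlgebra.ι K (v (σ j))).prod)
      = ∏ j, MvPolynomial.X (v j) := by
    intro σ
    rw [map_list_prod, List.map_ofFn]
    have : (List.ofFn ((FreeAlgebra.lift K fun i => (MvPolynomial.X i : MvPolynomial (Fin n) K))
        ∘ fun j => FreeAlgebra.ι K (v (σ j)))) = List.ofFn fun j =>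
          (MvPolynomial.X (v (σ j)) : MvPolynomial (Fin n) K) := by
      congr 1; ext j; simp [FreeAlgebra.lift_ι_apply]
    rw [this, List.prod_ofFn]
    exact Equiv.prod_comp σ fun j => MvPolynomial.X (v j)
  rw [Finset.sum_congr rfl (fun σ _ => h1 σ)]
  rw [Finset.sum_const]
  congr 1
  simp [Fintype.card_perm]

lemma piA_symz [CharZero K] (α : Fin n → ℕ) :
    piA K n (symz K n α) = ∏ i, (MvPolynomial.X i : MvPolynomial (Fin n) K) ^ α i := by
  rw [symz_eq, map_smul, piA_T]
  rw [← Nat.cast_smul_eq_nsmul K, smul_smul, inv_mul_cancel₀ (factorial_cast_ne K _), one_smul]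
  -- now: ∏ j, X (get j) = ∏ i, X i ^ α i
  rw [← List.prod_ofFn (f := fun j => MvPolynomial.X ((word n α).get j))]
  have h0 : (List.ofFn fun j => (MvPolynomial.X ((word n α).get j) : MvPolynomial (Fin n) K))
      = (word n α).map MvPolynomial.X := by
    conv_rhs => rw [← List.ofFn_get (word n α), List.map_ofFn]
    rfl
  rw [h0]
  show ((List.flatten ((List.finRange n).map fun i => List.replicate (α i) i)).map
      MvPolynomial.X).prod = _
  rw [List.map_flatten, List.prod_flatten, List.map_map, List.map_map]
  have h2 : ((List.finRange n).map ((List.prod ∘ List.map MvPolynomial.X) ∘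
      fun i => List.replicate (α i) i)) = (List.finRange n).map
        fun i => (MvPolynomial.X i : MvPolynomial (Fin n) K) ^ α i := by
    apply List.map_congr_left
    intro i _
    simp
  rw [h2, ← List.ofFn_eq_map, List.prod_ofFn]
/-- `Phi` as a linear map. -/
def PhiL : MvPolynomial (Fin n) K →ₗ[K] FreeAlgebra K (Fin n) :=
  Finsupp.linearCombination K (fun d : Fin n →₀ ℕ => symz K n (fun i => d i)) ∘ₗ
    (AddMonoidAlgebra.coeffLinearEquiv K).toLinearMap

lemma Phi_eq (p : MvPolynomial (Fin n) K) : Phi K n p = PhiL K n p := by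
  rfl

lemma Phi_monomial (d : Fin n →₀ ℕ) :
    Phi K n (MvPolynomial.monomial d (1 : K)) = symz K n (fun i => d i) := by
  classical
  unfold Phi
  rw [MvPolynomial.support_monomial]
  simp

lemma piA_Phi [CharZero K] (p : MvPolynomial (Fin n) K) : piA K n (Phi K n p) = p := by
  unfold Phi
  rw [map_sum]
  have h1 : ∀ d ∈ p.support, piA K n (p.coeff d • symz K n fun i => d i)
      = MvPolynomial.monomial d (p.coeff d) := by
    intro d _
    rw [map_smul, piA_symz]
    have : ∏ i, (MvPolynomial.X i : MvPolynomial (Fin n) K) ^ d i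
        = MvPolynomial.monomial d (1 : K) := by
      rw [← MvPolynomial.prod_X_pow_eq_monomial]
      exact (Finset.prod_subset (Finset.subset_univ _) (by
        intro i _ hi
        simp [Finsupp.notMem_support_iff.mp hi])).symm
    rw [this, MvPolynomial.smul_monomial, smul_eq_mul, mul_one]
  rw [Finset.sum_congr rfl h1]
  exact MvPolynomial.support_sum_monomial_coeff p

lemma Phi_injective [CharZero K] : Function.Injective (Phi K n) := by
  intro p q h
  have := congrArg (piA K n) h
  rwa [piA_Phi, piA_Phi] at this

/-- span of the symmetrized monomials -/
def SymSpan : Submodule K (FreeAlgebra K (Fin n)) :=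
  Submodule.span K (Set.range fun α : Fin n → ℕ => symz K n α)

lemma Phi_piA [CharZero K] {x : FreeAlgebra K (Fin n)} (hx : x ∈ SymSpan K n) :
    Phi K n (piA K n x) = x := by
  induction hx using Submodule.span_induction with
  | mem x h =>
    obtain ⟨α, rfl⟩ := h
    rw [piA_symz]
    have h3 : (∏ i, (MvPolynomial.X i : MvPolynomial (Fin n) K) ^ α i)
        = MvPolynomial.monomial (Finsupp.equivFunOnFinite.symm α) (1 : K) := by
      rw [← MvPolynomial.prod_X_pow_eq_monomial]
      refine (Finset.prod_subset (Finset.subset_univ _) ?_).symm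
      intro i _ hi
      have h0 : α i = 0 := Finsupp.notMem_support_iff.mp hi
      rw [h0, pow_zero]
    rw [h3, Phi_monomial]
    rfl
  | zero => rw [map_zero, Phi_eq, map_zero]
  | add x y _ _ hx hy => rw [Phi_eq] at *; rw [map_add, map_add, hx, hy]
  | smul c x _ hx => rw [Phi_eq] at *; rw [map_smul, map_smul, hx]
lemma neg_one_pow_sub {a b : ℕ} (h : b ≤ a) : ((-1 : K))^(a - b) = (-1)^a * (-1)^b := by
  have h1 : ((-1:K))^(a-b) * (-1)^b = (-1)^a := by rw [← pow_add, Nat.sub_add_cancel h]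
  calc ((-1:K))^(a-b) = ((-1)^(a-b) * (-1)^b) * (-1)^b := by
        rw [mul_assoc, ← pow_add, ← two_mul, pow_mul]; simp
    _ = (-1)^a * (-1)^b := by rw [h1]

lemma comb1 {m : ℕ} (U : Finset (Fin m)) :
    ∑ T ∈ U.powerset, ((-1 : K))^(U.card - T.card) = if U = ∅ then 1 else 0 := by
  have h1 : ∀ T ∈ U.powerset, ((-1 : K))^(U.card - T.card) = (-1)^U.card * (-1)^T.card := by
    intro T hT
    exact neg_one_pow_sub K (Finset.card_le_card (Finset.mem_powerset.mp hT))
  rw [Finset.sum_congr rfl h1, ← Finset.mul_sum]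
  have h2 : (∑ T ∈ U.powerset, ((-1 : K))^T.card) = if U = ∅ then 1 else 0 := by
    have h3 := congrArg (fun z : ℤ => (z : K)) (Finset.sum_powerset_neg_one_pow_card (x := U))
    push_cast at h3
    convert h3 using 2
  rw [h2]
  by_cases hU : U = ∅ <;> simp [hU]

lemma comb2 {m : ℕ} (r : Fin m → Fin m) :
    ∑ S : Finset (Fin m), (if (∀ k, r k ∈ S) then ((-1 : K))^(m - S.card) else 0)
      = if Function.Bijective r then 1 else 0 := by
  classical
  set R := Finset.image r Finset.univ with hR
  have hcond : ∀ S : Finset (Fin m), (∀ k, r k ∈ S) ↔ R ⊆ S := by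
    intro S
    constructor
    · intro h x hx
      obtain ⟨k, _, rfl⟩ := Finset.mem_image.mp hx
      exact h k
    · intro h k
      exact h (Finset.mem_image.mpr ⟨k, Finset.mem_univ k, rfl⟩)
  simp only [hcond]
  rw [← Finset.sum_filter]
  have hbij : ∑ S ∈ Finset.univ.filter (fun S => R ⊆ S), ((-1 : K))^(m - S.card)
      = ∑ T ∈ Rᶜ.powerset, ((-1 : K))^(Rᶜ.card - T.card) := by
    refine (Finset.sum_bij (fun T _ => R ∪ T) ?_ ?_ ?_ ?_).symm
    · intro T hT
      simp [Finset.subset_union_left]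
    · intro T₁ h₁ T₂ h₂ h
      have e1 : T₁ ⊆ Rᶜ := Finset.mem_powerset.mp h₁
      have e2 : T₂ ⊆ Rᶜ := Finset.mem_powerset.mp h₂
      have hd1 : Disjoint T₁ R := Finset.disjoint_left.mpr
        fun a ha => Finset.mem_compl.mp (e1 ha)
      have hd2 : Disjoint T₂ R := Finset.disjoint_left.mpr
        fun a ha => Finset.mem_compl.mp (e2 ha)
      have h' : R ∪ T₁ = R ∪ T₂ := h
      have h2 : (R ∪ T₁) \ R = (R ∪ T₂) \ R := by rw [h']
      rwa [Finset.union_sdiff_left, Finset.union_sdiff_left,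
        Finset.sdiff_eq_self_of_disjoint hd1, Finset.sdiff_eq_self_of_disjoint hd2] at h2
    · intro S hS
      have hRS : R ⊆ S := (Finset.mem_filter.mp hS).2
      refine ⟨S \ R, Finset.mem_powerset.mpr ?_, ?_⟩
      · intro x hx
        simp only [Finset.mem_sdiff] at hx
        exact Finset.mem_compl.mpr hx.2
      · show R ∪ (S \ R) = S
        rw [Finset.union_sdiff_of_subset hRS]
    · intro T hT
      have hTR : T ⊆ Rᶜ := Finset.mem_powerset.mp hT
      have hdis : Disjoint R T := Finset.disjoint_right.mpr
        fun a ha => Finset.mem_compl.mp (hTR ha)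
      show ((-1:K))^(Rᶜ.card - T.card) = ((-1:K))^(m - (R ∪ T).card)
      rw [Finset.card_union_of_disjoint hdis]
      congr 1
      have hRc : Rᶜ.card = m - R.card := by
        rw [Finset.card_compl]
        simp
      have hle : R.card + T.card ≤ m := by
        have := Finset.card_le_card hTR
        rw [hRc] at this
        have hRm : R.card ≤ m := by
          simpa using Finset.card_le_card (Finset.subset_univ R)
        omega
      omega
  rw [hbij, comb1]
  congr 1
  rw [Finset.compl_eq_empty_iff, eq_iff_iff]
  constructor
  · intro h
    rw [← Finite.surjective_iff_bijective]
    intro b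
    have : b ∈ R := h ▸ Finset.mem_univ b
    obtain ⟨a, _, ha⟩ := Finset.mem_image.mp this
    exact ⟨a, ha⟩
  · intro h
    exact Finset.image_univ_of_surjective h.surjective

lemma polar (m : ℕ) (y : Fin m → FreeAlgebra K (Fin n)) :
    ∑ S : Finset (Fin m), ((-1 : K))^(m - S.card) • (∑ j ∈ S, y j)^m
      = ∑ σ : Equiv.Perm (Fin m), (List.ofFn fun j => y (σ j)).prod := by
  classical
  have hf : ∀ S : Finset (Fin m), (∑ j ∈ S, y j)^m
      = ∑ r ∈ Fintype.piFinset (fun _ : Fin m => S),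
          (List.ofFn fun k => y (r k)).prod := by
    intro S
    have h := MultilinearMap.map_sum_finset
      (f := MultilinearMap.mkPiAlgebraFin K m (FreeAlgebra K (Fin n)))
      (g := fun (_ : Fin m) (j : Fin m) => y j) (A := fun _ => S)
    exact (MultilinearMap.mkPiAlgebraFin_apply_const (R := K) (n := m)
      (A := FreeAlgebra K (Fin n)) (∑ j ∈ S, y j)).symm.trans h
  calc ∑ S : Finset (Fin m), ((-1 : K))^(m - S.card) • (∑ j ∈ S, y j)^m
      = ∑ S : Finset (Fin m), ∑ r : Fin m → Fin m,
          (if (∀ k, r k ∈ S) then ((-1 : K))^(m - S.card) else 0)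
            • (List.ofFn fun k => y (r k)).prod := by
        apply Finset.sum_congr rfl
        intro S _
        rw [hf, Finset.smul_sum]
        have hps : Fintype.piFinset (fun _ : Fin m => S)
            = Finset.univ.filter (fun r : Fin m → Fin m => ∀ k, r k ∈ S) := by
          ext r
          simp [Fintype.mem_piFinset]
        rw [hps, Finset.sum_filter]
        apply Finset.sum_congr rfl
        intro r _
        rw [ite_smul, zero_smul]
    _ = ∑ r : Fin m → Fin m,
          (∑ S : Finset (Fin m), if (∀ k, r k ∈ S) then ((-1 : K))^(m - S.card) else 0)
            • (List.ofFn fun k => y (r k)).prod := by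
        rw [Finset.sum_comm]
        apply Finset.sum_congr rfl
        intro r _
        rw [Finset.sum_smul]
    _ = ∑ r ∈ Finset.univ.filter (fun r : Fin m → Fin m => Function.Bijective r),
          (List.ofFn fun k => y (r k)).prod := by
        rw [Finset.sum_filter]
        apply Finset.sum_congr rfl
        intro r _
        rw [comb2, ite_smul, one_smul, zero_smul]
    _ = ∑ σ : Equiv.Perm (Fin m), (List.ofFn fun j => y (σ j)).prod := by
        refine (Finset.sum_bij (fun (σ : Equiv.Perm (Fin m)) _ => (σ : Fin m → Fin m))
          ?_ ?_ ?_ ?_).symm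
        · intro σ _
          exact Finset.mem_filter.mpr ⟨Finset.mem_univ _, σ.bijective⟩
        · intro σ₁ _ σ₂ _ h
          exact Equiv.coe_fn_injective h
        · intro r hr
          have hb : Function.Bijective r := (Finset.mem_filter.mp hr).2
          exact ⟨Equiv.ofBijective r hb, Finset.mem_univ _, rfl⟩
        · intro σ _
          rfl
lemma linear_form_eq {m : ℕ} (v : Fin m → Fin n) (S : Finset (Fin m)) :
    ∑ j ∈ S, FreeAlgebra.ι K (v j)
      = ∑ i, (((S.filter fun j => v j = i).card : K)) • FreeAlgebra.ι K i := by
  classical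
  rw [← Finset.sum_fiberwise S v (fun j => FreeAlgebra.ι K (v j))]
  apply Finset.sum_congr rfl
  intro i _
  have h1 : ∀ j ∈ S.filter (fun j => v j = i), FreeAlgebra.ι K (v j) = FreeAlgebra.ι K i := by
    intro j hj
    rw [(Finset.mem_filter.mp hj).2]
  rw [Finset.sum_congr rfl h1, Finset.sum_const, ← Nat.cast_smul_eq_nsmul K]

lemma T_mem_Reg {m : ℕ} (v : Fin m → Fin n) : T K n m v ∈ Reg K n := by
  classical
  have hp := polar K n m (fun j => FreeAlgebra.ι K (v j))
  rw [show T K n m v = ∑ σ : Equiv.Perm (Fin m),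
      (List.ofFn fun j => FreeAlgebra.ι K (v (σ j))).prod from rfl, ← hp]
  apply Submodule.sum_mem
  intro S _
  apply Submodule.smul_mem
  apply Submodule.subset_span
  exact ⟨m, fun i => ((S.filter fun j => v j = i).card : K), by rw [linear_form_eq]⟩

lemma symz_mem_Reg (α : Fin n → ℕ) : symz K n α ∈ Reg K n := by
  rw [symz_eq]
  exact Submodule.smul_mem _ _ (T_mem_Reg K n _)

lemma T_mem_SymSpan [CharZero K] {m : ℕ} (v : Fin m → Fin n) :
    T K n m v ∈ SymSpan K n := by
  classical
  set α : Fin n → ℕ := fun i => (List.ofFn v).count i with hα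
  have hperm : (List.ofFn ((word n α).get)).Perm (List.ofFn v) := by
    rw [List.ofFn_get]
    exact word_perm_ofFn n v
  have hT : T K n m v = T K n (word n α).length (word n α).get :=
    (T_congr K n _ _ hperm).symm
  have hsz : T K n (word n α).length (word n α).get
      = (((word n α).length.factorial : K)) • symz K n α := by
    rw [symz_eq, smul_inv_smul₀ (factorial_cast_ne K _)]
  rw [hT, hsz]
  exact Submodule.smul_mem _ _ (Submodule.subset_span ⟨α, rfl⟩)

lemma pow_linear_mem [CharZero K] (c : Fin n → K) (m : ℕ) :
    (∑ i, c i • FreeAlgebra.ι K i) ^ m ∈ SymSpan K n := by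
  classical
  set W : (Fin m → Fin n) → FreeAlgebra K (Fin n) :=
    fun r => (List.ofFn fun k => FreeAlgebra.ι K (r k)).prod with hW
  have hexp : (∑ i, c i • FreeAlgebra.ι K i) ^ m
      = ∑ r : Fin m → Fin n, (∏ k, c (r k)) • W r := by
    have h := MultilinearMap.map_sum
      (f := MultilinearMap.mkPiAlgebraFin K m (FreeAlgebra K (Fin n)))
      (g := fun (_ : Fin m) (j : Fin n) => c j • FreeAlgebra.ι K j)
    have h0 := (MultilinearMap.mkPiAlgebraFin_apply_const (R := K) (n := m)
      (A := FreeAlgebra K (Fin n)) (∑ i, c i • FreeAlgebra.ι K i)).symm.trans h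
    rw [h0]
    apply Finset.sum_congr rfl
    intro r _
    rw [show (MultilinearMap.mkPiAlgebraFin K m (FreeAlgebra K (Fin n))
        fun i => c (r i) • FreeAlgebra.ι K (r i))
      = (∏ k, c (r k)) • MultilinearMap.mkPiAlgebraFin K m (FreeAlgebra K (Fin n))
        (fun i => FreeAlgebra.ι K (r i)) from
      MultilinearMap.map_smul_univ _ (fun i => c (r i)) (fun i => FreeAlgebra.ι K (r i))]
    rw [MultilinearMap.mkPiAlgebraFin_apply]
  have hsym : ∀ σ : Equiv.Perm (Fin m),
      (∑ i, c i • FreeAlgebra.ι K i) ^ m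
        = ∑ r : Fin m → Fin n, (∏ k, c (r k)) • W (fun k => r (σ k)) := by
    intro σ
    rw [hexp]
    refine (Fintype.sum_equiv ⟨fun r => r ∘ σ, fun r => r ∘ σ.symm,
        fun r => funext fun k => by simp, fun r => funext fun k => by simp⟩
      (fun r => (∏ k, c (r k)) • W (fun k => r (σ k)))
      (fun r => (∏ k, c (r k)) • W r) ?_).symm
    intro r
    show (∏ k, c (r k)) • W (fun k => r (σ k)) = (∏ k, c (r (σ k))) • W (fun k => r (σ k))
    rw [show (∏ k, c (r k)) = ∏ k, c (r (σ k)) from (Equiv.prod_comp σ fun k => c (r k)).symm]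
  have hmul : (m.factorial : K) • (∑ i, c i • FreeAlgebra.ι K i) ^ m
      = ∑ r : Fin m → Fin n, (∏ k, c (r k)) • T K n m r := by
    have h1 : (m.factorial : K) • (∑ i, c i • FreeAlgebra.ι K i) ^ m
        = ∑ _σ : Equiv.Perm (Fin m), (∑ i, c i • FreeAlgebra.ι K i) ^ m := by
      rw [Finset.sum_const, ← Nat.cast_smul_eq_nsmul K]
      congr 2
      simp [Fintype.card_perm]
    rw [h1, Finset.sum_congr rfl (fun σ _ => hsym σ), Finset.sum_comm]
    apply Finset.sum_congr rfl
    intro r _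
    rw [← Finset.smul_sum]
    congr 1
  have hfin : (∑ i, c i • FreeAlgebra.ι K i) ^ m
      = (m.factorial : K)⁻¹ • ∑ r : Fin m → Fin n, (∏ k, c (r k)) • T K n m r := by
    rw [← hmul, inv_smul_smul₀ (factorial_cast_ne K _)]
  rw [hfin]
  apply Submodule.smul_mem
  apply Submodule.sum_mem
  intro r _
  exact Submodule.smul_mem _ _ (T_mem_SymSpan K n r)

theorem symmetrization_iso_onto_regular (K : Type) [Field K] [CharZero K] (n : ℕ) :
    (∀ p q : MvPolynomial (Fin n) K, Phi K n (p + q) = Phi K n p + Phi K n q) ∧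
    (∀ (c : K) (p : MvPolynomial (Fin n) K), Phi K n (c • p) = c • Phi K n p) ∧
    Function.Injective (Phi K n) ∧
    Set.range (Phi K n) = (Reg K n : Set (FreeAlgebra K (Fin n))) := by
  refine ⟨?_, ?_, Phi_injective K n, ?_⟩
  · intro p q
    rw [Phi_eq, Phi_eq, Phi_eq, map_add]
  · intro c p
    rw [Phi_eq, Phi_eq, map_smul]
  · apply Set.Subset.antisymm
    · rintro x ⟨p, rfl⟩
      show Phi K n p ∈ Reg K n
      unfold Phi
      apply Submodule.sum_mem
      intro d _
      exact Submodule.smul_mem _ _ (symz_mem_Reg K n _)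
    · intro x hx
      have hle : Reg K n ≤ SymSpan K n := by
        rw [Reg, Submodule.span_le]
        rintro y ⟨m, c, rfl⟩
        exact pow_linear_mem K n c m
      exact ⟨piA K n x, Phi_piA K n (hle hx)⟩

end
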